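/- Let ε₀, μ₀, τ₀, σ₀ > 0 and let (E, H, J, K) solve the abstract weak graphene system on [0, T_fin]. Then for every t ∈ [0, T_fin] the energy identity (1/2)·d/dt[ ε₀‖E(t)‖²_X + μ₀‖H(t)‖²_Y + (τ₀/σ₀)‖J(t)‖²_Z ] + (1/σ₀)‖J(t)‖²_Z = −⟨K(t), H(t)⟩_Y holds. -/

import Mathlib

open scoped RealInnerProductSpace

/-- Energy identity for the abstract weak graphene system. -/
theorem graphene_energy_identity
    {X Y Z : Type*}
    [NormedAddCommGroup X] [InnerProductSpace ℝ X]
    [NormedAddCommGroup Y] [InnerProductSpace ℝ Y]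
    [NormedAddCommGroup Z] [InnerProductSpace ℝ Z]
    (B : X →L[ℝ] Y) (T : X →L[ℝ] Z)
    (ε₀ μ₀ τ₀ σ₀ Tfin : ℝ)
    (hε₀ : 0 < ε₀) (hμ₀ : 0 < μ₀) (hτ₀ : 0 < τ₀) (hσ₀ : 0 < σ₀) (hTfin : 0 < Tfin)
    (E : ℝ → X) (H : ℝ → Y) (J : ℝ → Z) (K : ℝ → Y)
    (hE : ContDiff ℝ 2 E) (hH : ContDiff ℝ 2 H) (hJ : ContDiff ℝ 2 J)
    (hK : ContDiff ℝ 1 K)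
    (heq1 : ∀ t ∈ Set.Icc (0:ℝ) Tfin, ∀ φ : X,
      ε₀ * ⟪deriv E t, φ⟫ = ⟪H t, B φ⟫ - ⟪J t, T φ⟫)
    (heq2 : ∀ t ∈ Set.Icc (0:ℝ) Tfin, μ₀ • deriv H t = -(B (E t)) - K t)
    (heq3 : ∀ t ∈ Set.Icc (0:ℝ) Tfin, τ₀ • deriv J t + J t = σ₀ • T (E t)) :
    ∀ t ∈ Set.Icc (0:ℝ) Tfin,
      (1/2) * deriv (fun s => ε₀ * ‖E s‖^2 + μ₀ * ‖H s‖^2 + (τ₀/σ₀) * ‖J s‖^2) t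
        + (1/σ₀) * ‖J t‖^2 = -⟪K t, H t⟫ := by
  intro t ht
  have hE' : HasDerivAt E (deriv E t) t :=
    ((hE.differentiable (by norm_num)) t).hasDerivAt
  have hH' : HasDerivAt H (deriv H t) t :=
    ((hH.differentiable (by norm_num)) t).hasDerivAt
  have hJ' : HasDerivAt J (deriv J t) t :=
    ((hJ.differentiable (by norm_num)) t).hasDerivAt
  have dE : HasDerivAt (fun s => ‖E s‖ ^ 2) (2 * ⟪deriv E t, E t⟫) t := by
    have := hE'.inner ℝ hE'
    simp only [real_inner_self_eq_norm_sq] at this ⊢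
    refine this.congr_deriv ?_
    rw [real_inner_comm (E t) (deriv E t)]; ring
  have dH : HasDerivAt (fun s => ‖H s‖ ^ 2) (2 * ⟪deriv H t, H t⟫) t := by
    have := hH'.inner ℝ hH'
    simp only [real_inner_self_eq_norm_sq] at this ⊢
    refine this.congr_deriv ?_
    rw [real_inner_comm (H t) (deriv H t)]; ring
  have dJ : HasDerivAt (fun s => ‖J s‖ ^ 2) (2 * ⟪deriv J t, J t⟫) t := by
    have := hJ'.inner ℝ hJ'
    simp only [real_inner_self_eq_norm_sq] at this ⊢
    refine this.congr_deriv ?_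
    rw [real_inner_comm (J t) (deriv J t)]; ring
  have dTot : HasDerivAt (fun s => ε₀ * ‖E s‖^2 + μ₀ * ‖H s‖^2 + (τ₀/σ₀) * ‖J s‖^2)
      (ε₀ * (2 * ⟪deriv E t, E t⟫) + μ₀ * (2 * ⟪deriv H t, H t⟫)
        + (τ₀/σ₀) * (2 * ⟪deriv J t, J t⟫)) t :=
    ((dE.const_mul ε₀).add (dH.const_mul μ₀)).add (dJ.const_mul (τ₀/σ₀))
  rw [dTot.deriv]
  have h1 := heq1 t ht (E t)
  have h2 : μ₀ * ⟪deriv H t, H t⟫ = -⟪B (E t), H t⟫ - ⟪K t, H t⟫ := by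
    have := heq2 t ht
    have h := congrArg (fun y => ⟪y, H t⟫) this
    simpa [real_inner_smul_left, inner_sub_left, inner_neg_left] using h
  have h3 : τ₀ * ⟪deriv J t, J t⟫ = σ₀ * ⟪T (E t), J t⟫ - ‖J t‖^2 := by
    have := heq3 t ht
    have h := congrArg (fun z => ⟪z, J t⟫) this
    simp only [inner_add_left, real_inner_smul_left, real_inner_self_eq_norm_sq] at h
    linarith
  have h3' : (τ₀/σ₀) * ⟪deriv J t, J t⟫ = ⟪T (E t), J t⟫ - (1/σ₀) * ‖J t‖^2 := by
    field_simp
    linarith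
  have hc1 : ⟪H t, B (E t)⟫ = ⟪B (E t), H t⟫ := real_inner_comm _ _
  have hc2 : ⟪J t, T (E t)⟫ = ⟪T (E t), J t⟫ := real_inner_comm _ _
  nlinarith [h1, h2, h3', hc1, hc2]
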